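/- Let A ∈ ℝ^{n×n} have all row vectors of Euclidean norm at most β > 0. Then the minimum singular value of A satisfies σ_min(A) ≥ ((n−1)/(n β²))^{(n−1)/2} · |det(A)|. -/

import Mathlib

open Matrix Finset RealInnerProductSpace

/-- Euclidean norm of a vector. -/
noncomputable def eucNorm {n : ℕ} (v : Fin n → ℝ) : ℝ :=
  Real.sqrt (∑ i, (v i) ^ 2)

/-- Minimum singular value of a matrix: the infimum of ‖A x‖ over unit vectors x. -/
noncomputable def sMin {n : ℕ} (A : Matrix (Fin n) (Fin n) ℝ) : ℝ :=
  sInf {r : ℝ | ∃ x : Fin n → ℝ, eucNorm x = 1 ∧ r = eucNorm (A *ᵥ x)}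

/-- Reinterpret a plain vector as an element of Euclidean space. -/
def toE {n : ℕ} (v : Fin n → ℝ) : EuclideanSpace ℝ (Fin n) := WithLp.toLp 2 v

lemma enorm_nonneg' {n : ℕ} (v : Fin n → ℝ) : 0 ≤ eucNorm v := Real.sqrt_nonneg _

lemma enorm_sq {n : ℕ} (v : Fin n → ℝ) : (eucNorm v) ^ 2 = ∑ i, (v i) ^ 2 :=
  Real.sq_sqrt (Finset.sum_nonneg fun i _ => sq_nonneg _)

lemma enorm_eq_norm {n : ℕ} (v : Fin n → ℝ) : eucNorm v = ‖toE v‖ := by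
  rw [EuclideanSpace.norm_eq, eucNorm]
  congr 1
  exact Finset.sum_congr rfl fun i _ => (sq_abs _).symm

lemma euclid_inner {n : ℕ} (x y : EuclideanSpace ℝ (Fin n)) :
    ⟪x, y⟫ = ∑ k, x k * y k := by
  simp [PiLp.inner_apply, RCLike.inner_apply, mul_comm]

/-- Hadamard's inequality, matrix-column form. -/
lemma hadamard_ineq {n : ℕ} (M : Matrix (Fin n) (Fin n) ℝ) :
    |M.det| ≤ ∏ j, ‖toE (fun i => M i j)‖ := by
  classical
  haveI : WellFoundedLT (Fin n) := inferInstance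
  have h : Module.finrank ℝ (EuclideanSpace ℝ (Fin n)) = Fintype.card (Fin n) := by
    simp
  set f : Fin n → EuclideanSpace ℝ (Fin n) := fun j => toE (fun i => M i j) with hf
  set e := EuclideanSpace.basisFun (Fin n) ℝ
  set b := InnerProductSpace.gramSchmidtOrthonormalBasis h f with hb
  have hM : M = e.toBasis.toMatrix f := by
    ext i j
    simp [Module.Basis.toMatrix_apply, OrthonormalBasis.coe_toBasis_repr_apply,
      EuclideanSpace.basisFun_repr, hf, e]
    rfl
  have hsplit : M.det = (e.toBasis.toMatrix b.toBasis).det * (b.toBasis.toMatrix f).det := by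
    rw [hM, ← Matrix.det_mul, Module.Basis.toMatrix_mul_toMatrix]
  have h1 : |(e.toBasis.toMatrix b.toBasis).det| = 1 := by
    have := OrthonormalBasis.det_to_matrix_orthonormalBasis e b
    rwa [Module.Basis.det_apply, Real.norm_eq_abs] at this
  have h2 : (b.toBasis.toMatrix f).det = ∏ i, ⟪b i, f i⟫ := by
    rw [← Module.Basis.det_apply]
    exact InnerProductSpace.gramSchmidtOrthonormalBasis_det h f
  calc |M.det| = |(e.toBasis.toMatrix b.toBasis).det| * |(b.toBasis.toMatrix f).det| := by
        rw [hsplit, abs_mul]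
    _ = |∏ i, ⟪b i, f i⟫| := by rw [h1, h2, one_mul]
    _ ≤ ∏ i, ‖f i‖ := by
        rw [Finset.abs_prod]
        apply Finset.prod_le_prod (fun i _ => abs_nonneg _)
        intro i _
        calc |⟪b i, f i⟫| ≤ ‖b i‖ * ‖f i‖ := abs_real_inner_le_norm _ _
          _ = ‖f i‖ := by rw [b.orthonormal.1 i, one_mul]

/-- Hadamard in the form used for the main theorem. -/
lemma hadamard_cols {n : ℕ} (A : Matrix (Fin n) (Fin n) ℝ)
    (b : OrthonormalBasis (Fin n) ℝ (EuclideanSpace ℝ (Fin n))) :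
    |A.det| ≤ ∏ j, eucNorm (A *ᵥ (fun k => b j k)) := by
  classical
  set Q : Matrix (Fin n) (Fin n) ℝ := Matrix.of fun i j => b j i with hQdef
  have hQ : Qᵀ * Q = 1 := by
    ext j k
    have horth := orthonormal_iff_ite.mp b.orthonormal j k
    rw [euclid_inner] at horth
    simp only [Matrix.mul_apply, Matrix.transpose_apply, hQdef, Matrix.of_apply,
      Matrix.one_apply]
    rw [horth]
  have hdetQ : Q.det * Q.det = 1 := by
    have := congrArg Matrix.det hQ
    rwa [Matrix.det_mul, Matrix.det_transpose, Matrix.det_one] at this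
  have habsQ : |Q.det| = 1 := by
    rcases mul_self_eq_one_iff.mp hdetQ with h | h <;> rw [h] <;> norm_num
  have hcol : ∀ j, (fun i => (A * Q) i j) = (A *ᵥ (fun k => b j k)) := by
    intro j
    funext i
    simp [Matrix.mul_apply, Matrix.mulVec, dotProduct, hQdef]
  have := hadamard_ineq (A * Q)
  rw [Matrix.det_mul, abs_mul, habsQ, mul_one] at this
  calc |A.det| ≤ ∏ j, ‖toE (fun i => (A * Q) i j)‖ := this
    _ = ∏ j, eucNorm (A *ᵥ (fun k => b j k)) := by
        refine Finset.prod_congr rfl fun j _ => ?_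
        rw [← enorm_eq_norm, hcol j]

/-- Parseval. -/
lemma parseval {n : ℕ} (b : OrthonormalBasis (Fin n) ℝ (EuclideanSpace ℝ (Fin n)))
    (v : EuclideanSpace ℝ (Fin n)) :
    ∑ j, ⟪b j, v⟫ ^ 2 = ‖v‖ ^ 2 := by
  have h1 : ‖b.repr v‖ = ‖v‖ := b.repr.norm_map v
  rw [EuclideanSpace.norm_eq (b.repr v)] at h1
  rw [← h1, Real.sq_sqrt (Finset.sum_nonneg fun i _ => sq_nonneg _)]
  exact Finset.sum_congr rfl fun j _ => by
    rw [b.repr_apply_apply, Real.norm_eq_abs, sq_abs]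

/-- The column-sum bound. -/
lemma sum_sq_cols {n : ℕ} (A : Matrix (Fin n) (Fin n) ℝ) (β : ℝ)
    (hβ : 0 ≤ β) (hrows : ∀ i, eucNorm (fun j => A i j) ≤ β)
    (b : OrthonormalBasis (Fin n) ℝ (EuclideanSpace ℝ (Fin n))) :
    ∑ j, (eucNorm (A *ᵥ (fun k => b j k))) ^ 2 ≤ (n : ℝ) * β ^ 2 := by
  classical
  have key : ∑ j, (eucNorm (A *ᵥ (fun k => b j k))) ^ 2
      = ∑ i, (eucNorm (fun j => A i j)) ^ 2 := by
    simp only [enorm_sq]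
    rw [Finset.sum_comm]
    refine Finset.sum_congr rfl fun i _ => ?_
    have : ∀ j, (A *ᵥ (fun k => b j k)) i = ⟪b j, toE (fun k => A i k)⟫ := by
      intro j
      rw [euclid_inner]
      simp [Matrix.mulVec, dotProduct, toE, mul_comm]
    simp only [this]
    rw [parseval b (toE fun k => A i k), ← enorm_eq_norm]
    exact enorm_sq _
  rw [key]
  calc ∑ i, (eucNorm (fun j => A i j)) ^ 2 ≤ ∑ _i : Fin n, β ^ 2 := by
        refine Finset.sum_le_sum fun i _ => ?_
        exact pow_le_pow_left₀ (enorm_nonneg' _) (hrows i) 2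
    _ = (n : ℝ) * β ^ 2 := by simp [mul_comm]

/-- AM-GM product bound over the erased set. -/
lemma amgm_prod {n : ℕ} (hn : 0 < n) {g : Fin n → ℝ} (hg : ∀ j, 0 ≤ g j)
    {S : ℝ} (i0 : Fin n) (hS : ∑ j ∈ Finset.univ.erase i0, (g j) ^ 2 ≤ S) :
    ∏ j ∈ Finset.univ.erase i0, g j ≤ (S / ((n : ℝ) - 1)) ^ (((n : ℝ) - 1) / 2) := by
  classical
  rcases Nat.lt_or_ge n 2 with h2 | h2
  · have hn1 : n = 1 := by omega
    subst hn1
    have he : (Finset.univ.erase i0 : Finset (Fin 1)) = ∅ := by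
      apply Finset.eq_empty_of_forall_notMem
      intro j hj
      exact (Finset.mem_erase.mp hj).1 (Subsingleton.elim j i0)
    rw [he]
    norm_num
  · have hm0 : (0:ℝ) < (n : ℝ) - 1 := by
      have : (2 : ℝ) ≤ (n : ℝ) := by exact_mod_cast h2
      linarith
    set m : ℝ := (n : ℝ) - 1 with hm
    have hS0 : 0 ≤ S := le_trans (Finset.sum_nonneg fun j _ => sq_nonneg _) hS
    have hcard : ((Finset.univ.erase i0).card : ℝ) = m := by
      rw [Finset.card_erase_of_mem (Finset.mem_univ _)]
      simp only [Finset.card_univ, Fintype.card_fin]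
      rw [Nat.cast_sub hn, Nat.cast_one]
    have amgm := Real.geom_mean_le_arith_mean_weighted (Finset.univ.erase i0)
      (fun _ => 1 / m) (fun j => (g j) ^ 2)
      (fun i _ => by positivity)
      (by rw [Finset.sum_const, nsmul_eq_mul, hcard]; field_simp)
      (fun i _ => sq_nonneg _)
    have hsum : ∑ j ∈ Finset.univ.erase i0, (1 / m) * (g j) ^ 2 ≤ S / m := by
      rw [← Finset.mul_sum, one_div, inv_mul_eq_div]
      gcongr
    have hprod : (∏ j ∈ Finset.univ.erase i0, ((g j) ^ 2 : ℝ) ^ ((1:ℝ) / m))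
        = ((∏ j ∈ Finset.univ.erase i0, g j) ^ 2) ^ ((1:ℝ) / m) := by
      rw [Real.finset_prod_rpow _ _ (fun j _ => sq_nonneg _), Finset.prod_pow]
    set P : ℝ := ∏ j ∈ Finset.univ.erase i0, g j with hP
    have hP0 : 0 ≤ P := Finset.prod_nonneg fun j _ => hg j
    have key : ((P ^ 2 : ℝ)) ^ ((1:ℝ) / m) ≤ S / m := by
      rw [← hprod]
      exact le_trans amgm hsum
    have hexp : P = (((P ^ 2 : ℝ)) ^ ((1:ℝ) / m)) ^ (m / 2) := by
      rw [← Real.rpow_two, ← Real.rpow_mul hP0, ← Real.rpow_mul hP0]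
      rw [show (2:ℝ) * (1 / m) * (m / 2) = 1 by field_simp]
      rw [Real.rpow_one]
    calc P = (((P ^ 2 : ℝ)) ^ ((1:ℝ) / m)) ^ (m / 2) := hexp
      _ ≤ (S / m) ^ (m / 2) := Real.rpow_le_rpow (Real.rpow_nonneg (sq_nonneg _) _) key
          (by positivity)

theorem stmt5 {n : ℕ} (hn : 0 < n) (A : Matrix (Fin n) (Fin n) ℝ) (β : ℝ)
    (hβ : 0 < β) (hrows : ∀ i, eucNorm (fun j => A i j) ≤ β) :
    sMin A ≥ (((n : ℝ) - 1) / (n * β ^ 2)) ^ (((n : ℝ) - 1) / 2) * |A.det| := by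
  classical
  have hn1 : (1:ℝ) ≤ (n:ℝ) := by exact_mod_cast hn
  have hnb : (0:ℝ) < (n:ℝ) * β ^ 2 := by positivity
  set c0 : ℝ := (((n : ℝ) - 1) / (n * β ^ 2)) ^ (((n : ℝ) - 1) / 2) with hc0def
  set K : ℝ := (((n:ℝ) * β ^ 2) / ((n:ℝ) - 1)) ^ (((n:ℝ) - 1) / 2) with hKdef
  have hc0 : 0 ≤ c0 :=
    Real.rpow_nonneg (div_nonneg (by linarith) hnb.le) _
  have hK0 : 0 ≤ K :=
    Real.rpow_nonneg (div_nonneg hnb.le (by linarith)) _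
  have hcK : c0 * K = 1 := by
    rcases Nat.lt_or_ge n 2 with h2 | h2
    · have hn1' : n = 1 := by omega
      subst hn1'
      rw [hc0def, hKdef]
      norm_num
    · have hm0 : (0:ℝ) < (n : ℝ) - 1 := by
        have : (2 : ℝ) ≤ (n : ℝ) := by exact_mod_cast h2
        linarith
      rw [hc0def, hKdef,
        ← Real.mul_rpow (div_nonneg hm0.le hnb.le) (div_nonneg hnb.le hm0.le)]
      rw [div_mul_div_comm, mul_comm ((n:ℝ) - 1), div_self (by positivity), Real.one_rpow]
  have key : ∀ x : Fin n → ℝ, eucNorm x = 1 → c0 * |A.det| ≤ eucNorm (A *ᵥ x) := by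
    intro x hx
    set i0 : Fin n := ⟨0, hn⟩
    have hfin : Module.finrank ℝ (EuclideanSpace ℝ (Fin n)) = Fintype.card (Fin n) := by simp
    have hxn : ‖toE x‖ = 1 := by rw [← enorm_eq_norm]; exact hx
    have horth : Orthonormal ℝ (Set.restrict {i0} (fun _ : Fin n => toE x)) := by
      constructor
      · intro i; exact hxn
      · intro i j hij
        exact absurd (Subsingleton.elim i j) hij
    obtain ⟨b, hb⟩ := horth.exists_orthonormalBasis_extension_of_card_eq hfin
    have hb0 : b i0 = toE x := hb i0 rfl
    have hc0col : (A *ᵥ (fun k => b i0 k)) = A *ᵥ x := by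
      congr 1
      funext k
      rw [hb0]
      rfl
    have hPle : ∏ j ∈ Finset.univ.erase i0, eucNorm (A *ᵥ (fun k => b j k)) ≤ K := by
      apply amgm_prod hn (fun j => enorm_nonneg' _) i0
      calc ∑ j ∈ Finset.univ.erase i0, (eucNorm (A *ᵥ (fun k => b j k))) ^ 2
          ≤ ∑ j, (eucNorm (A *ᵥ (fun k => b j k))) ^ 2 :=
            Finset.sum_le_sum_of_subset_of_nonneg (Finset.subset_univ _)
              (fun j _ _ => sq_nonneg _)
        _ ≤ (n : ℝ) * β ^ 2 := sum_sq_cols A β hβ.le hrows b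
    have hmain : |A.det| ≤ eucNorm (A *ᵥ x) * K := by
      calc |A.det| ≤ ∏ j, eucNorm (A *ᵥ (fun k => b j k)) := hadamard_cols A b
        _ = eucNorm (A *ᵥ (fun k => b i0 k)) * ∏ j ∈ Finset.univ.erase i0,
              eucNorm (A *ᵥ (fun k => b j k)) := (Finset.mul_prod_erase _ _ (Finset.mem_univ i0)).symm
        _ ≤ eucNorm (A *ᵥ x) * K := by
            rw [hc0col]
            exact mul_le_mul_of_nonneg_left hPle (enorm_nonneg' _)
    calc c0 * |A.det| ≤ c0 * (eucNorm (A *ᵥ x) * K) := mul_le_mul_of_nonneg_left hmain hc0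
      _ = (c0 * K) * eucNorm (A *ᵥ x) := by ring
      _ = eucNorm (A *ᵥ x) := by rw [hcK, one_mul]
  rw [ge_iff_le, sMin]
  apply le_csInf
  · refine ⟨eucNorm (A *ᵥ fun k => if k = ⟨0, hn⟩ then 1 else 0),
      fun k => if k = ⟨0, hn⟩ then 1 else 0, ?_, rfl⟩
    rw [eucNorm]
    have hsum : ∑ i, ((if i = (⟨0, hn⟩ : Fin n) then (1:ℝ) else 0)) ^ 2 = 1 := by
      simp [ite_pow]
    rw [hsum, Real.sqrt_one]
  · rintro r ⟨x, hx, rfl⟩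
    exact key x hx
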